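/- There exists a dynamical system that is sensitive to initial conditions but not asymptotically sensitive (namely the shift restricted to eventually-zero binary sequences). -/

import Mathlib

open PiNat

noncomputable local instance : MetricSpace (ℕ → Bool) := PiNat.metricSpace

/-- eventually-zero binary sequences -/
abbrev EvZero : Type := {s : ℕ → Bool // ∃ N, ∀ n ≥ N, s n = false}

/-- the shift map -/
def shiftT : EvZero → EvZero :=
  fun s => ⟨fun n => s.1 (n + 1), by
    obtain ⟨N, hN⟩ := s.2
    exact ⟨N, fun n hn => hN (n + 1) (le_trans hn (Nat.le_succ n))⟩⟩

lemma shiftT_iterate (s : EvZero) (k : ℕ) : ∀ j, (shiftT^[k] s).1 j = s.1 (j + k) := by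
  induction k generalizing s with
  | zero => simp
  | succ n ih =>
    intro j
    rw [Function.iterate_succ_apply]
    rw [ih (shiftT s) j]
    show s.1 (j + n + 1) = s.1 (j + (n + 1))
    rfl

lemma dist_pinat_eq {x y : ℕ → Bool} (h : x ≠ y) :
    dist x y = (1 / 2 : ℝ) ^ firstDiff x y := PiNat.dist_eq_of_ne h

lemma shiftT_lipschitz : LipschitzWith 2 shiftT := by
  apply LipschitzWith.of_dist_le_mul
  intro a b
  rcases eq_or_ne a b with rfl | hab
  · simp
  rcases eq_or_ne (shiftT a) (shiftT b) with he | hne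
  · rw [he, dist_self]
    positivity
  have hab' : a.1 ≠ b.1 := fun h => hab (Subtype.ext h)
  have hne' : (shiftT a).1 ≠ (shiftT b).1 := fun h => hne (Subtype.ext h)
  rw [Subtype.dist_eq, Subtype.dist_eq, dist_pinat_eq hne', dist_pinat_eq hab']
  set m := firstDiff (shiftT a).1 (shiftT b).1 with hm
  have hd : a.1 (m + 1) ≠ b.1 (m + 1) := by
    have := apply_firstDiff_ne hne'
    rw [← hm] at this
    simpa [shiftT] using this
  have hle : firstDiff a.1 b.1 ≤ m + 1 := by
    by_contra h
    exact hd (apply_eq_of_lt_firstDiff (lt_of_not_ge h))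
  have : ((1 : ℝ) / 2) ^ (m + 1) ≤ (1 / 2) ^ firstDiff a.1 b.1 :=
    pow_le_pow_of_le_one (by norm_num) (by norm_num) hle
  calc ((1 : ℝ) / 2) ^ m = 2 * (1 / 2) ^ (m + 1) := by ring
    _ ≤ 2 * (1 / 2) ^ firstDiff a.1 b.1 := by linarith
    _ = ((2 : NNReal) : ℝ) * (1 / 2) ^ firstDiff a.1 b.1 := by norm_num

/-- there is a system sensitive but not asymptotically sensitive. -/
theorem exists_sensitive_not_asymptoticSensitive :
    ∃ (X : Type) (_ : MetricSpace X) (T : X → X), Continuous T ∧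
      (∃ δ > 0, ∀ x : X, ∀ ε > 0, ∃ y z : X, dist y x < ε ∧ dist z x < ε ∧
        ∃ n ≥ 1, dist (T^[n] y) (T^[n] z) > δ) ∧
      ¬ ∃ δ > 0, ∀ x : X, ∀ ε > 0, ∃ y z : X, dist y x < ε ∧ dist z x < ε ∧
        {n : ℕ | dist (T^[n] y) (T^[n] z) > δ}.Infinite := by
  refine ⟨EvZero, inferInstance, shiftT, shiftT_lipschitz.continuous, ?_, ?_⟩
  · -- sensitivity with δ = 1/2
    refine ⟨1/2, by norm_num, fun x ε hε => ?_⟩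
    obtain ⟨N, hN⟩ : ∃ N : ℕ, (1 / 2 : ℝ) ^ N < ε :=
      exists_pow_lt_of_lt_one hε (by norm_num)
    set n := N + 1
    set zf : ℕ → Bool := fun k => if k = n then !(x.1 n) else x.1 k with hzf
    have hzev : ∃ M, ∀ k ≥ M, zf k = false := by
      obtain ⟨M, hM⟩ := x.2
      refine ⟨max M (n+1), fun k hk => ?_⟩
      have h1 : k ≠ n := by omega
      simp [hzf, h1, hM k (le_trans (le_max_left _ _) hk)]
    set z : EvZero := ⟨zf, hzev⟩
    have hzx : z.1 ≠ x.1 := by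
      intro h
      have := congrFun h n
      simp [z, hzf] at this
    have hagree : ∀ k < n, z.1 k = x.1 k := by
      intro k hk
      simp [z, hzf, Nat.ne_of_lt hk]
    have hfdn : n ≤ firstDiff z.1 x.1 :=
      (mem_cylinder_iff_le_firstDiff hzx n).1 hagree
    have hdzx : dist z x < ε := by
      rw [Subtype.dist_eq, dist_pinat_eq hzx]
      calc ((1:ℝ)/2) ^ firstDiff z.1 x.1 ≤ (1/2) ^ n :=
            pow_le_pow_of_le_one (by norm_num) (by norm_num) hfdn
        _ ≤ (1/2) ^ N := pow_le_pow_of_le_one (by norm_num) (by norm_num) (Nat.le_succ N)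
        _ < ε := hN
    refine ⟨x, z, by simp [hε], hdzx, n, Nat.succ_le_succ (Nat.zero_le N), ?_⟩
    have h0 : (shiftT^[n] x).1 0 ≠ (shiftT^[n] z).1 0 := by
      rw [shiftT_iterate, shiftT_iterate]
      simp [z, hzf]
    have hneq : (shiftT^[n] x).1 ≠ (shiftT^[n] z).1 := fun h => h0 (congrFun h 0)
    have hfd0 : firstDiff (shiftT^[n] x).1 (shiftT^[n] z).1 = 0 := by
      by_contra h
      exact h0 (apply_eq_of_lt_firstDiff (Nat.pos_of_ne_zero h))
    rw [Subtype.dist_eq, dist_pinat_eq hneq, hfd0]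
    norm_num
  · rintro ⟨δ, hδ, H⟩
    obtain ⟨y, z, -, -, hinf⟩ := H ⟨fun _ => false, 0, fun _ _ => rfl⟩ 1 one_pos
    obtain ⟨Ny, hNy⟩ := y.2
    obtain ⟨Nz, hNz⟩ := z.2
    apply hinf
    apply Set.Finite.subset (Set.finite_Iio (max Ny Nz))
    intro n hn
    simp only [Set.mem_setOf_eq] at hn
    by_contra h
    have hmax : max Ny Nz ≤ n := le_of_not_gt h
    have heq : shiftT^[n] y = shiftT^[n] z := by
      apply Subtype.ext
      funext j
      rw [shiftT_iterate, shiftT_iterate, hNy (j + n) (by omega), hNz (j + n) (by omega)]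
    rw [heq, dist_self] at hn
    linarith
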